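/- Let H ∈ ℝ^{N×N} be symmetric positive definite, G ∈ ℝ^{q×N}, W ∈ ℝ^q, S ∈ ℝ^{q×n}, and x ∈ ℝ^n. Let I ⊆ {1,...,q} be a subset of constraint indices, and let G̃ ∈ ℝ^{|I|×N}, W̃ ∈ ℝ^{|I|}, S̃ ∈ ℝ^{|I|×n} consist of the rows of G, W, S indexed by I. Assume the rows of G̃ are linearly independent. Define z* := H^{-1} G̃ᵀ (G̃ H^{-1} G̃ᵀ)^{-1} (W̃ + S̃ x). If −(G̃ H^{-1} G̃ᵀ)^{-1} (W̃ + S̃ x) ≥ 0 componentwise and G z* ≤ W + S x componentwise, then z* is the unique minimizer of the quadratic function z ↦ zᵀ H z over the polyhedron {z ∈ ℝ^N : G z ≤ W + S x}. -/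

import Mathlib

open Matrix

/-- **Explicit piecewise-affine solution of the mp-QP on an active-set region.**
Let `H` be symmetric positive definite and let `G̃, W̃, S̃` consist of the rows of
`G, W, S` indexed by a set `I` of active constraints, the rows of `G̃` being
linearly independent.  If the candidate multiplier
`−(G̃ H⁻¹ G̃ᵀ)⁻¹ (W̃ + S̃ x)` is nonnegative and the candidate point
`zstar := H⁻¹ G̃ᵀ (G̃ H⁻¹ G̃ᵀ)⁻¹ (W̃ + S̃ x)` is feasible, then `zstar` is the
unique minimizer of `z ↦ zᵀ H z` over `{z : G z ≤ W + S x}`. -/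
theorem stmt_10 (N q n : ℕ)
    (H : Matrix (Fin N) (Fin N) ℝ) (hH : H.PosDef)
    (G : Matrix (Fin q) (Fin N) ℝ) (W : Fin q → ℝ) (S : Matrix (Fin q) (Fin n) ℝ)
    (x : Fin n → ℝ) (I : Finset (Fin q))
    (Gt : Matrix {i // i ∈ I} (Fin N) ℝ) (Wt : {i // i ∈ I} → ℝ)
    (St : Matrix {i // i ∈ I} (Fin n) ℝ)
    (hGt : Gt = G.submatrix (fun i : {i // i ∈ I} => (i : Fin q)) id)
    (hWt : Wt = fun i : {i // i ∈ I} => W (i : Fin q))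
    (hSt : St = S.submatrix (fun i : {i // i ∈ I} => (i : Fin q)) id)
    (hindep : LinearIndependent ℝ (fun i : {i // i ∈ I} => Gt i))
    (zstar : Fin N → ℝ)
    (hzstar : zstar = (H⁻¹ * Gtᵀ * (Gt * H⁻¹ * Gtᵀ)⁻¹).mulVec (Wt + St.mulVec x))
    (hlam : (0 : {i // i ∈ I} → ℝ) ≤ -((Gt * H⁻¹ * Gtᵀ)⁻¹).mulVec (Wt + St.mulVec x))
    (hfeas : G.mulVec zstar ≤ W + S.mulVec x) :
    (∀ z : Fin N → ℝ, G.mulVec z ≤ W + S.mulVec x →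
        zstar ⬝ᵥ H.mulVec zstar ≤ z ⬝ᵥ H.mulVec z)
    ∧ (∀ z' : Fin N → ℝ, G.mulVec z' ≤ W + S.mulVec x →
        (∀ z : Fin N → ℝ, G.mulVec z ≤ W + S.mulVec x →
          z' ⬝ᵥ H.mulVec z' ≤ z ⬝ᵥ H.mulVec z) → z' = zstar) := by
  classical
  set v : {i // i ∈ I} → ℝ := Wt + St.mulVec x with hv
  set M : Matrix {i // i ∈ I} {i // i ∈ I} ℝ := Gt * H⁻¹ * Gtᵀ with hMdef
  have hHinv : H⁻¹.PosDef := hH.inv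
  -- symmetry of H and H⁻¹ (as transposes)
  have hsym : Hᵀ = H := by
    ext i j
    simpa using congrFun (congrFun hH.1 i) j
  have hsyminv : (H⁻¹)ᵀ = H⁻¹ := by
    ext i j
    simpa using congrFun (congrFun hHinv.1 i) j
  -- rows of Gt independent: (Gtᵀ *ᵥ y = 0) → y = 0
  have hker : ∀ y : {i // i ∈ I} → ℝ, Gtᵀ.mulVec y = 0 → y = 0 := by
    intro y hy
    have h := (Fintype.linearIndependent_iff.mp hindep) y ?_
    · funext i; exact h i
    · funext j
      have := congrFun hy j
      simpa [mulVec_transpose, vecMul, dotProduct, mul_comm, Finset.sum_apply] using this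
  -- M is positive definite
  have hMpd : M.PosDef := by
    refine Matrix.PosDef.of_dotProduct_mulVec_pos ?_ ?_
    · show Mᴴ = M
      have hct : Mᴴ = Mᵀ := by ext i j; simp [conjTranspose_apply]
      rw [hct, hMdef, transpose_mul, transpose_mul, transpose_transpose, hsyminv,
        Matrix.mul_assoc]
    · intro y hy
      have hne : Gtᵀ.mulVec y ≠ 0 := fun h => hy (hker y h)
      have hpos := hHinv.dotProduct_mulVec_pos (x := Gtᵀ.mulVec y) hne
      have heq : star y ⬝ᵥ M *ᵥ y = star (Gtᵀ *ᵥ y) ⬝ᵥ H⁻¹ *ᵥ (Gtᵀ *ᵥ y) := by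
        simp only [star_trivial, hMdef]
        rw [← mulVec_mulVec, ← mulVec_mulVec, dotProduct_mulVec y Gt, ← mulVec_transpose]
      rw [heq]; exact hpos
  have hHdet : IsUnit H.det := (Matrix.isUnit_iff_isUnit_det H).mp hH.isUnit
  have hMdet : IsUnit M.det := (Matrix.isUnit_iff_isUnit_det M).mp hMpd.isUnit
  set u : {i // i ∈ I} → ℝ := M⁻¹.mulVec v with hu
  have hu0 : ∀ i, u i ≤ 0 := by
    intro i
    have h := hlam i
    simp only [Pi.neg_apply, Pi.zero_apply] at h
    linarith
  -- H *ᵥ zstar = Gtᵀ *ᵥ u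
  have hHz : H.mulVec zstar = Gtᵀ.mulVec u := by
    rw [hzstar, mulVec_mulVec]
    have h : H * (H⁻¹ * Gtᵀ * M⁻¹) = Gtᵀ * M⁻¹ := by
      rw [← Matrix.mul_assoc, ← Matrix.mul_assoc, Matrix.mul_nonsing_inv _ hHdet,
        Matrix.one_mul]
    rw [h, ← mulVec_mulVec, hu]
  -- Gt *ᵥ zstar = v
  have hGz : Gt.mulVec zstar = v := by
    rw [hzstar, mulVec_mulVec]
    have h : Gt * (H⁻¹ * Gtᵀ * M⁻¹) = 1 := by
      rw [← Matrix.mul_assoc, ← Matrix.mul_assoc]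
      calc Gt * H⁻¹ * Gtᵀ * M⁻¹ = M * M⁻¹ := by rw [hMdef]
        _ = 1 := Matrix.mul_nonsing_inv _ hMdet
    rw [h, one_mulVec]
  -- feasibility restricted to active rows
  have hGtle : ∀ z : Fin N → ℝ, G.mulVec z ≤ W + S.mulVec x → ∀ i, Gt.mulVec z i ≤ v i := by
    intro z hz i
    have h := hz (i : Fin q)
    simp only [hv, hGt, hWt, hSt, mulVec, dotProduct, submatrix_apply, id_eq, Pi.add_apply]
    simpa [mulVec, dotProduct] using h
  -- key inequality
  have key : ∀ z : Fin N → ℝ, G.mulVec z ≤ W + S.mulVec x →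
      zstar ⬝ᵥ H.mulVec zstar + (z - zstar) ⬝ᵥ H.mulVec (z - zstar) ≤ z ⬝ᵥ H.mulVec z := by
    intro z hz
    set d : Fin N → ℝ := z - zstar with hd
    have hcross : 0 ≤ (H.mulVec zstar) ⬝ᵥ d := by
      rw [hHz]
      have h1 : (Gtᵀ.mulVec u) ⬝ᵥ d = u ⬝ᵥ Gt.mulVec d := by
        rw [mulVec_transpose, ← dotProduct_mulVec]
      rw [h1]
      have hdle : ∀ i, Gt.mulVec d i ≤ 0 := by
        intro i
        have h2 : Gt.mulVec d = Gt.mulVec z - v := by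
          rw [hd, mulVec_sub, hGz]
        rw [h2]
        exact sub_nonpos.mpr (hGtle z hz i)
      rw [dotProduct]
      refine Finset.sum_nonneg fun i _ => ?_
      have := mul_nonneg (neg_nonneg.mpr (hu0 i)) (neg_nonneg.mpr (hdle i))
      nlinarith
    have hzdecomp : z = zstar + d := by rw [hd]; ring_nf
    have hs1 : zstar ⬝ᵥ H.mulVec d = (H.mulVec zstar) ⬝ᵥ d := by
      rw [dotProduct_mulVec, ← mulVec_transpose, hsym]
    have hs2 : d ⬝ᵥ H.mulVec zstar = (H.mulVec zstar) ⬝ᵥ d := dotProduct_comm _ _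
    have hexp : z ⬝ᵥ H.mulVec z
        = zstar ⬝ᵥ H.mulVec zstar + 2 * ((H.mulVec zstar) ⬝ᵥ d) + d ⬝ᵥ H.mulVec d := by
      conv_lhs => rw [hzdecomp]
      rw [mulVec_add, add_dotProduct, dotProduct_add, dotProduct_add, hs1, hs2]
      ring
    rw [hexp]
    linarith
  have hsemid : ∀ d : Fin N → ℝ, 0 ≤ d ⬝ᵥ H.mulVec d := by
    intro d
    simpa using hH.posSemidef.dotProduct_mulVec_nonneg d
  constructor
  · intro z hz
    have h := key z hz
    have h2 := hsemid (z - zstar)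
    linarith
  · intro z' hz' hmin
    have h1 := hmin zstar hfeas
    have h2 := key z' hz'
    have hq : (z' - zstar) ⬝ᵥ H.mulVec (z' - zstar) ≤ 0 := by linarith
    by_contra hne
    have hdne : z' - zstar ≠ 0 := sub_ne_zero.mpr hne
    have := hH.dotProduct_mulVec_pos (x := z' - zstar) hdne
    simp only [star_trivial] at this
    linarith
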